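/- Let f be a q-linearized polynomial, α_1,...,α_n an F_q-basis of F_{q^n}, r_i = f(α_i) + e_i with rank(e) = t, and let V ⊆ F_q^n be the kernel of b ↦ Σ b_i e_i. If linearized polynomials P_1, P_2 satisfy P_1(α_i) = P_2(r_i) for all i, then P_1 - P_2 ∘ f vanishes on the (n-t)-dimensional F_q-subspace W = {Σ b_i α_i : b ∈ V} of F_{q^n}. -/

import Mathlib

/-- with r_i = f(α_i) + e_i, rank(e) = t, and V the kernel of
b ↦ Σ b_i e_i, if P_1(α_i) = P_2(r_i) for all i then P_1 - P_2 ∘ f vanishes on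
the (n-t)-dimensional subspace W = {Σ b_i α_i : b ∈ V} of F_{q^n}. -/
theorem stmt_13 (q n : ℕ) (hq : IsPrimePow q) (hn : 0 < n)
    (F L : Type) [Field F] [Fintype F] [Field L] [Fintype L] [Algebra F L]
    (hF : Fintype.card F = q) (hL : Fintype.card L = q ^ n)
    (B : Module.Basis (Fin n) F L)
    (m : ℕ) (fc : Fin (m + 1) → L)
    (e : Fin n → L) (t : ℕ)
    (ht : Module.finrank F (Submodule.span F (Set.range e)) = t)
    (r : Fin n → L)
    (hr : ∀ i : Fin n, r i = (∑ j : Fin (m + 1), fc j * (B i) ^ q ^ (j : ℕ)) + e i)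
    (d₁ d₂ : ℕ) (P₁ : Fin (d₁ + 1) → L) (P₂ : Fin (d₂ + 1) → L)
    (hP : ∀ i : Fin n,
      (∑ j : Fin (d₁ + 1), P₁ j * (B i) ^ q ^ (j : ℕ))
        = ∑ j : Fin (d₂ + 1), P₂ j * (r i) ^ q ^ (j : ℕ)) :
    ∃ W : Submodule F L,
      Module.finrank F W = n - t ∧
      (W : Set L) = {w : L | ∃ b : Fin n → F,
        (∑ i : Fin n, b i • e i) = 0 ∧ w = ∑ i : Fin n, b i • (B i : L)} ∧
      ∀ w ∈ W,
        (∑ j : Fin (d₁ + 1), P₁ j * w ^ q ^ (j : ℕ))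
          - (∑ j : Fin (d₂ + 1), P₂ j *
              ((∑ l : Fin (m + 1), fc l * w ^ q ^ (l : ℕ))) ^ q ^ (j : ℕ)) = 0 := by
  classical
  -- characteristic setup
  set p := ringChar F with hpdef
  haveI hp : Fact p.Prime := ⟨CharP.char_is_prime F p⟩
  haveI : CharP L p := charP_of_injective_ringHom (algebraMap F L).injective p
  obtain ⟨k, hk⟩ := FiniteField.card F p
  have hqpk : q = p ^ (k : ℕ) := by rw [← hF, hk.2]
  -- additivity of x ↦ x ^ q ^ j
  have hadd : ∀ (j : ℕ) (x y : L), (x + y) ^ q ^ j = x ^ q ^ j + y ^ q ^ j := by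
    intro j x y
    rw [hqpk, ← pow_mul]
    exact add_pow_char_pow x y p _
  have hsmul : ∀ (j : ℕ) (c : F) (x : L), (c • x) ^ q ^ j = c • x ^ q ^ j := by
    intro j c x
    rw [Algebra.smul_def, mul_pow, ← map_pow]
    have : c ^ q ^ j = c := by rw [← hF]; exact FiniteField.pow_card_pow j c
    rw [this, ← Algebra.smul_def]
  -- x ↦ x ^ q ^ j as a linear map
  let φ : ℕ → (L →ₗ[F] L) := fun j =>
    { toFun := fun x => x ^ q ^ j
      map_add' := hadd j
      map_smul' := fun c x => hsmul j c x }
  -- key computation: a linearized polynomial applied to a linear combination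
  have key : ∀ (D : ℕ) (g : Fin (D + 1) → L) (b : Fin n → F) (x : Fin n → L),
      (∑ j : Fin (D + 1), g j * (∑ i : Fin n, b i • x i) ^ q ^ (j : ℕ))
        = ∑ i : Fin n, b i • (∑ j : Fin (D + 1), g j * (x i) ^ q ^ (j : ℕ)) := by
    intro D g b x
    have h1 : ∀ j : Fin (D + 1),
        (∑ i : Fin n, b i • x i) ^ q ^ (j : ℕ) = ∑ i : Fin n, b i • (x i) ^ q ^ (j : ℕ) := by
      intro j
      have h0 := map_sum (φ (j : ℕ)) (fun i => b i • x i) Finset.univ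
      simp only [φ, LinearMap.coe_mk, AddHom.coe_mk] at h0
      rw [h0]
      exact Finset.sum_congr rfl fun i _ => hsmul _ _ _
    calc (∑ j : Fin (D + 1), g j * (∑ i : Fin n, b i • x i) ^ q ^ (j : ℕ))
        = ∑ j : Fin (D + 1), ∑ i : Fin n, b i • (g j * (x i) ^ q ^ (j : ℕ)) := by
          refine Finset.sum_congr rfl fun j _ => ?_
          rw [h1 j, Finset.mul_sum]
          exact Finset.sum_congr rfl fun i _ => (mul_smul_comm _ _ _)
      _ = ∑ i : Fin n, ∑ j : Fin (D + 1), b i • (g j * (x i) ^ q ^ (j : ℕ)) :=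
          Finset.sum_comm
      _ = ∑ i : Fin n, b i • (∑ j : Fin (D + 1), g j * (x i) ^ q ^ (j : ℕ)) := by
          refine Finset.sum_congr rfl fun i _ => ?_
          rw [Finset.smul_sum]
  -- the "error" linear map E : b ↦ ∑ b i • e i
  let E : (Fin n → F) →ₗ[F] L :=
    { toFun := fun b => ∑ i : Fin n, b i • e i
      map_add' := fun b c => by simp [add_smul, Finset.sum_add_distrib]
      map_smul' := fun c b => by simp [Finset.smul_sum, smul_smul]
      }
  have hrange : LinearMap.range E = Submodule.span F (Set.range e) := by
    ext x
    rw [LinearMap.mem_range, Submodule.mem_span_range_iff_exists_fun F]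
    constructor
    · rintro ⟨b, hb⟩; exact ⟨b, hb⟩
    · rintro ⟨b, hb⟩; exact ⟨b, hb⟩
  have hker : Module.finrank F (LinearMap.ker E) = n - t := by
    have h := LinearMap.finrank_range_add_finrank_ker E
    rw [hrange, ht] at h
    have hn' : Module.finrank F (Fin n → F) = n := by simp
    rw [hn'] at h
    omega
  -- W is the image of ker E under the basis isomorphism
  let A : (Fin n → F) ≃ₗ[F] L := B.equivFun.symm
  refine ⟨(LinearMap.ker E).map (A : (Fin n → F) →ₗ[F] L), ?_, ?_, ?_⟩
  · rw [LinearEquiv.finrank_map_eq A (LinearMap.ker E), hker]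
  · ext w
    simp only [Submodule.map_coe, Set.mem_image, SetLike.mem_coe, LinearMap.mem_ker,
      Set.mem_setOf_eq]
    constructor
    · rintro ⟨b, hb, hw⟩
      refine ⟨b, hb, ?_⟩
      rw [← hw]
      simp [A, Module.Basis.equivFun_symm_apply]
    · rintro ⟨b, hb, hw⟩
      refine ⟨b, hb, ?_⟩
      rw [hw]
      simp [A, Module.Basis.equivFun_symm_apply]
  · rintro w hw
    obtain ⟨b, hb, hw⟩ := hw
    replace hb : (∑ i : Fin n, b i • e i) = 0 := hb
    have hw' : w = ∑ i : Fin n, b i • (B i : L) := by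
      rw [← hw]; simp [A, Module.Basis.equivFun_symm_apply]
    -- f(w) = ∑ b i • r i
    have hfw : (∑ l : Fin (m + 1), fc l * w ^ q ^ (l : ℕ)) = ∑ i : Fin n, b i • r i := by
      rw [hw', key m fc b (fun i => (B i : L))]
      have : ∀ i : Fin n, (∑ l : Fin (m + 1), fc l * (B i : L) ^ q ^ (l : ℕ)) = r i - e i := by
        intro i; rw [hr i]; ring
      rw [Finset.sum_congr rfl fun i _ => by rw [this i]]
      simp only [smul_sub, Finset.sum_sub_distrib, hb, sub_zero]
    have h1 : (∑ j : Fin (d₁ + 1), P₁ j * w ^ q ^ (j : ℕ))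
        = ∑ i : Fin n, b i • (∑ j : Fin (d₂ + 1), P₂ j * (r i) ^ q ^ (j : ℕ)) := by
      rw [hw', key d₁ P₁ b (fun i => (B i : L))]
      exact Finset.sum_congr rfl fun i _ => by rw [hP i]
    have h2 : (∑ j : Fin (d₂ + 1), P₂ j *
          ((∑ l : Fin (m + 1), fc l * w ^ q ^ (l : ℕ))) ^ q ^ (j : ℕ))
        = ∑ i : Fin n, b i • (∑ j : Fin (d₂ + 1), P₂ j * (r i) ^ q ^ (j : ℕ)) := by
      rw [hfw, key d₂ P₂ b r]
    rw [h1, h2, sub_self]
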